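/- Let f be a t-sparse multilinear polynomial on {0,1}^n with coefficients bounded in absolute value by B, and let f^d be the truncation of f obtained by deleting all terms of degree greater than d. For any locally α-smooth distribution D, Pr_{x∼D}[f(x) ≠ f^d(x)] ≤ t·(α/(1+α))^d, and consequently E_{x∼D}[(f(x) − f^d(x))²] ≤ 4t³B²·(α/(1+α))^d. -/

import Mathlib

open Finset

theorem sum_biUnion_le' {ι κ : Type*} [DecidableEq κ] (s : Finset ι) (t : ι → Finset κ)
    (g : κ → ℝ) (hg : ∀ x, 0 ≤ g x) :
    ∑ x ∈ s.biUnion t, g x ≤ ∑ i ∈ s, ∑ x ∈ t i, g x := by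
  classical
  induction s using Finset.induction_on with
  | empty => simp
  | insert _ _ hi ih =>
    rename_i a s
    rw [Finset.biUnion_insert, Finset.sum_insert hi]
    calc ∑ x ∈ t a ∪ s.biUnion t, g x
        ≤ ∑ x ∈ t a, g x + ∑ x ∈ s.biUnion t, g x := by
          have h := Finset.sum_union_inter (s₁ := t a) (s₂ := s.biUnion t) (f := g)
          have h2 : 0 ≤ ∑ x ∈ t a ∩ s.biUnion t, g x := Finset.sum_nonneg fun x _ => hg x
          linarith
      _ ≤ _ := by linarith [ih]

theorem smooth_ones_bound {n : ℕ} (α : ℝ) (hα : 1 ≤ α)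
    (D : (Fin n → Bool) → ℝ) (hD0 : ∀ x, 0 ≤ D x) (hD1 : ∑ x, D x = 1)
    (hsmooth : ∀ x x' : Fin n → Bool, hammingDist x x' = 1 → D x ≤ α * D x') :
    ∀ T : Finset (Fin n),
      ∑ x ∈ univ.filter (fun x : Fin n → Bool => ∀ i ∈ T, x i = true), D x
        ≤ (α / (1 + α)) ^ T.card := by
  classical
  have hα0 : (0:ℝ) < 1 + α := by linarith
  have hr0 : (0:ℝ) ≤ α / (1 + α) := div_nonneg (by linarith) hα0.le
  intro T
  induction T using Finset.induction_on with
  | empty => simp [hD1]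
  | insert _ _ hi ih =>
    rename_i a T
    set A : Finset (Fin n → Bool) :=
      univ.filter (fun x => (∀ i ∈ T, x i = true) ∧ x a = true) with hA
    set Bs : Finset (Fin n → Bool) :=
      univ.filter (fun x => (∀ i ∈ T, x i = true) ∧ x a = false) with hBs
    have hins : univ.filter (fun x : Fin n → Bool => ∀ i ∈ insert a T, x i = true) = A := by
      apply Finset.filter_congr
      intro x _
      simp [Finset.forall_mem_insert, and_comm]
    -- Step 1 : sum over A ≤ α * sum over Bs
    have step1 : ∑ x ∈ A, D x ≤ α * ∑ y ∈ Bs, D y := by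
      have h1 : ∑ x ∈ A, D x ≤ ∑ x ∈ A, α * D (Function.update x a false) := by
        apply Finset.sum_le_sum
        intro x hx
        have hxa : x a = true := ((Finset.mem_filter.mp hx).2).2
        apply hsmooth
        have hset : (univ.filter fun j => x j ≠ Function.update x a false j) = {a} := by
          ext j
          by_cases hj : j = a
          · subst hj; simp [Function.update_apply, hxa]
          · simp [Function.update_apply, hj]
        simp only [hammingDist, hset, Finset.card_singleton]
      have hinj : ∀ x ∈ A, ∀ x' ∈ A,
          Function.update x a false = Function.update x' a false → x = x' := by
        intro x hx x' hx' h
        have hxa : x a = true := ((Finset.mem_filter.mp hx).2).2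
        have hxa' : x' a = true := ((Finset.mem_filter.mp hx').2).2
        funext j
        by_cases hj : j = a
        · subst hj; rw [hxa, hxa']
        · have := congrFun h j
          simpa [Function.update_apply, hj] using this
      have h2 : ∑ x ∈ A, D (Function.update x a false)
          = ∑ y ∈ A.image (fun x => Function.update x a false), D y :=
        (Finset.sum_image hinj).symm
      have himg : A.image (fun x => Function.update x a false) ⊆ Bs := by
        intro y hy
        rcases Finset.mem_image.mp hy with ⟨x, hx, rfl⟩
        rcases Finset.mem_filter.mp hx with ⟨-, hxT, hxa⟩
        refine Finset.mem_filter.mpr ⟨Finset.mem_univ _, ?_, ?_⟩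
        · intro i hiT
          have hia : i ≠ a := fun h => hi (h ▸ hiT)
          simpa [Function.update_apply, hia] using hxT i hiT
        · simp [Function.update_apply]
      have h3 : ∑ y ∈ A.image (fun x => Function.update x a false), D y ≤ ∑ y ∈ Bs, D y :=
        Finset.sum_le_sum_of_subset_of_nonneg himg (fun y _ _ => hD0 y)
      calc ∑ x ∈ A, D x ≤ ∑ x ∈ A, α * D (Function.update x a false) := h1
        _ = α * ∑ x ∈ A, D (Function.update x a false) := by rw [Finset.mul_sum]
        _ = α * ∑ y ∈ A.image (fun x => Function.update x a false), D y := by rw [h2]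
        _ ≤ α * ∑ y ∈ Bs, D y := by
            exact mul_le_mul_of_nonneg_left h3 (by linarith)
    -- Step 2 : split
    have hsplit : ∑ x ∈ univ.filter (fun x : Fin n → Bool => ∀ i ∈ T, x i = true), D x
        = ∑ x ∈ A, D x + ∑ y ∈ Bs, D y := by
      rw [← Finset.sum_filter_add_sum_filter_not
        (univ.filter (fun x : Fin n → Bool => ∀ i ∈ T, x i = true)) (fun x => x a = true)]
      congr 1
      · rw [hA, Finset.filter_filter]
      · rw [hBs, Finset.filter_filter]
        congr 1
        apply Finset.filter_congr
        intro x _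
        simp
    have hPnn : 0 ≤ ∑ x ∈ univ.filter (fun x : Fin n → Bool => ∀ i ∈ T, x i = true), D x :=
      Finset.sum_nonneg fun x _ => hD0 x
    have key : ∑ x ∈ A, D x ≤ (α / (1 + α)) *
        ∑ x ∈ univ.filter (fun x : Fin n → Bool => ∀ i ∈ T, x i = true), D x := by
      rw [div_mul_eq_mul_div, le_div_iff₀ hα0]
      nlinarith [step1, hsplit]
    rw [hins, Finset.card_insert_of_notMem hi, pow_succ']
    calc ∑ x ∈ A, D x ≤ (α / (1 + α)) *
        ∑ x ∈ univ.filter (fun x : Fin n → Bool => ∀ i ∈ T, x i = true), D x := key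
      _ ≤ (α / (1 + α)) * (α / (1 + α)) ^ T.card := mul_le_mul_of_nonneg_left ih hr0

/-- Truncating a t-sparse multilinear polynomial (coefficients
bounded by B) at degree d changes its value with probability at most
t·(α/(1+α))^d, and the squared error is at most 4t³B²·(α/(1+α))^d, under any
locally α-smooth distribution. -/
theorem truncation_error (n t d : ℕ) (B : ℝ)
    (c : Finset (Fin n) → ℝ)
    (hsparse : (univ.filter (fun T : Finset (Fin n) => c T ≠ 0)).card ≤ t)
    (hB : ∀ T, |c T| ≤ B)
    (α : ℝ) (hα : 1 ≤ α)
    (D : (Fin n → Bool) → ℝ) (hD0 : ∀ x, 0 ≤ D x) (hD1 : ∑ x, D x = 1)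
    (hsmooth : ∀ x x' : Fin n → Bool, hammingDist x x' = 1 → D x ≤ α * D x')
    (f fd : (Fin n → Bool) → ℝ)
    (hf : ∀ x, f x = ∑ T : Finset (Fin n), c T * ∏ i ∈ T, (if x i then (1 : ℝ) else 0))
    (hfd : ∀ x, fd x = ∑ T ∈ univ.filter (fun T : Finset (Fin n) => T.card ≤ d),
        c T * ∏ i ∈ T, (if x i then (1 : ℝ) else 0)) :
    (∑ x ∈ univ.filter (fun x : Fin n → Bool => f x ≠ fd x), D x ≤
        t * (α / (1 + α)) ^ d) ∧
    (∑ x, D x * (f x - fd x) ^ 2 ≤ 4 * t ^ 3 * B ^ 2 * (α / (1 + α)) ^ d) := by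
  classical
  have hα0 : (0:ℝ) < 1 + α := by linarith
  have hr0 : (0:ℝ) ≤ α / (1 + α) := div_nonneg (by linarith) hα0.le
  have hr1 : α / (1 + α) ≤ 1 := by rw [div_le_one hα0]; linarith
  have hB0 : (0:ℝ) ≤ B := le_trans (abs_nonneg _) (hB ∅)
  -- the difference
  have hdiff : ∀ x, f x - fd x = ∑ T ∈ univ.filter
      (fun T : Finset (Fin n) => ¬ T.card ≤ d),
      c T * ∏ i ∈ T, (if x i then (1 : ℝ) else 0) := by
    intro x
    rw [hf x, hfd x, ← Finset.sum_filter_add_sum_filter_not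
      (univ : Finset (Finset (Fin n))) (fun T => T.card ≤ d)
      (fun T => c T * ∏ i ∈ T, (if x i then (1 : ℝ) else 0))]
    ring
  set bad : Finset (Finset (Fin n)) :=
    univ.filter (fun T => c T ≠ 0 ∧ d < T.card) with hbad
  have hbadcard : bad.card ≤ t := by
    refine le_trans (Finset.card_le_card ?_) hsparse
    intro T hT
    exact Finset.mem_filter.mpr ⟨Finset.mem_univ T, (Finset.mem_filter.mp hT).2.1⟩
  -- part 1
  have hsub : univ.filter (fun x : Fin n → Bool => f x ≠ fd x) ⊆
      bad.biUnion (fun T => univ.filter (fun x : Fin n → Bool => ∀ i ∈ T, x i = true)) := by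
    intro x hx
    have hne : f x - fd x ≠ 0 := sub_ne_zero.mpr (Finset.mem_filter.mp hx).2
    rw [hdiff x] at hne
    obtain ⟨T, hT, hTne⟩ := Finset.exists_ne_zero_of_sum_ne_zero hne
    have hcT : c T ≠ 0 := fun h => hTne (by simp [h])
    have hprod : ∀ i ∈ T, x i = true := by
      intro i hiT
      by_contra hxi
      exact hTne (by rw [Finset.prod_eq_zero hiT (by simp [hxi])]; ring)
    refine Finset.mem_biUnion.mpr ⟨T, ?_, ?_⟩
    · exact Finset.mem_filter.mpr ⟨Finset.mem_univ T,
        hcT, Nat.lt_of_not_le (Finset.mem_filter.mp hT).2⟩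
    · exact Finset.mem_filter.mpr ⟨Finset.mem_univ x, hprod⟩
  have part1 : ∑ x ∈ univ.filter (fun x : Fin n → Bool => f x ≠ fd x), D x ≤
      t * (α / (1 + α)) ^ d := by
    calc ∑ x ∈ univ.filter (fun x : Fin n → Bool => f x ≠ fd x), D x
        ≤ ∑ x ∈ bad.biUnion (fun T => univ.filter
            (fun x : Fin n → Bool => ∀ i ∈ T, x i = true)), D x :=
          Finset.sum_le_sum_of_subset_of_nonneg hsub (fun y _ _ => hD0 y)
      _ ≤ ∑ T ∈ bad, ∑ x ∈ univ.filter
            (fun x : Fin n → Bool => ∀ i ∈ T, x i = true), D x :=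
          sum_biUnion_le' _ _ _ hD0
      _ ≤ ∑ T ∈ bad, (α / (1 + α)) ^ d := by
          apply Finset.sum_le_sum
          intro T hT
          have hd : d ≤ T.card := (Finset.mem_filter.mp hT).2.2.le
          exact le_trans (smooth_ones_bound α hα D hD0 hD1 hsmooth T)
            (pow_le_pow_of_le_one hr0 hr1 hd)
      _ = (bad.card : ℝ) * (α / (1 + α)) ^ d := by
          rw [Finset.sum_const, nsmul_eq_mul]
      _ ≤ t * (α / (1 + α)) ^ d := by
          apply mul_le_mul_of_nonneg_right _ (pow_nonneg hr0 d)
          exact_mod_cast hbadcard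
  refine ⟨part1, ?_⟩
  -- pointwise bound |f - fd| ≤ t * B
  have hbound : ∀ x, |f x - fd x| ≤ t * B := by
    intro x
    rw [hdiff x]
    set s := univ.filter (fun T : Finset (Fin n) => ¬ T.card ≤ d) with hs
    have hrw : ∑ T ∈ s, c T * ∏ i ∈ T, (if x i then (1 : ℝ) else 0)
        = ∑ T ∈ s.filter (fun T => c T ≠ 0),
            c T * ∏ i ∈ T, (if x i then (1 : ℝ) else 0) := by
      refine (Finset.sum_filter_of_ne ?_).symm
      intro T _ hTne h0
      exact hTne (by simp [h0])
    rw [hrw]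
    have hterm : ∀ T ∈ s.filter (fun T => c T ≠ 0),
        |c T * ∏ i ∈ T, (if x i then (1 : ℝ) else 0)| ≤ B := by
      intro T _
      rw [abs_mul]
      have hp0 : (0:ℝ) ≤ ∏ i ∈ T, (if x i then (1 : ℝ) else 0) :=
        Finset.prod_nonneg fun i _ => by split_ifs <;> norm_num
      have hp1 : ∏ i ∈ T, (if x i then (1 : ℝ) else 0) ≤ 1 :=
        Finset.prod_le_one (fun i _ => by split_ifs <;> norm_num)
          (fun i _ => by split_ifs <;> norm_num)
      calc |c T| * |∏ i ∈ T, (if x i then (1 : ℝ) else 0)| ≤ B * 1 := by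
            apply mul_le_mul (hB T) _ (abs_nonneg _) hB0
            rw [abs_of_nonneg hp0]; exact hp1
        _ = B := mul_one B
    have hcard : (s.filter (fun T => c T ≠ 0)).card ≤ t := by
      refine le_trans (Finset.card_le_card ?_) hsparse
      intro T hT
      exact Finset.mem_filter.mpr ⟨Finset.mem_univ T, (Finset.mem_filter.mp hT).2⟩
    calc |∑ T ∈ s.filter (fun T => c T ≠ 0),
          c T * ∏ i ∈ T, (if x i then (1 : ℝ) else 0)|
        ≤ ∑ T ∈ s.filter (fun T => c T ≠ 0),
          |c T * ∏ i ∈ T, (if x i then (1 : ℝ) else 0)| := Finset.abs_sum_le_sum_abs _ _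
      _ ≤ ∑ _T ∈ s.filter (fun T => c T ≠ 0), B := Finset.sum_le_sum hterm
      _ = ((s.filter (fun T => c T ≠ 0)).card : ℝ) * B := by
          rw [Finset.sum_const, nsmul_eq_mul]
      _ ≤ t * B := by
          apply mul_le_mul_of_nonneg_right _ hB0
          exact_mod_cast hcard
  -- part 2
  have hzero : ∑ x ∈ univ.filter (fun x : Fin n → Bool => ¬ f x ≠ fd x),
      D x * (f x - fd x) ^ 2 = 0 := by
    apply Finset.sum_eq_zero
    intro x hx
    have : f x = fd x := not_not.mp (Finset.mem_filter.mp hx).2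
    simp [this]
  calc ∑ x, D x * (f x - fd x) ^ 2
      = ∑ x ∈ univ.filter (fun x : Fin n → Bool => f x ≠ fd x),
          D x * (f x - fd x) ^ 2 := by
        rw [← Finset.sum_filter_add_sum_filter_not (univ : Finset (Fin n → Bool))
          (fun x => f x ≠ fd x) (fun x => D x * (f x - fd x) ^ 2), hzero, add_zero]
    _ ≤ ∑ x ∈ univ.filter (fun x : Fin n → Bool => f x ≠ fd x),
          D x * ((t : ℝ) * B) ^ 2 := by
        apply Finset.sum_le_sum
        intro x _
        apply mul_le_mul_of_nonneg_left _ (hD0 x)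
        have h := hbound x
        have := abs_le.mp h
        nlinarith
    _ = ((t : ℝ) * B) ^ 2 * ∑ x ∈ univ.filter (fun x : Fin n → Bool => f x ≠ fd x),
          D x := by rw [← Finset.sum_mul, mul_comm]
    _ ≤ ((t : ℝ) * B) ^ 2 * (t * (α / (1 + α)) ^ d) :=
        mul_le_mul_of_nonneg_left part1 (by positivity)
    _ ≤ 4 * t ^ 3 * B ^ 2 * (α / (1 + α)) ^ d := by
        have hnn : (0:ℝ) ≤ (t:ℝ) ^ 3 * B ^ 2 * (α / (1 + α)) ^ d := by positivity
        nlinarith [hnn]
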